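/- Let d ≥ 3 divide n, let n-1 ≤ k ≤ 2n-3, and suppose d does not divide k. Then the evaluation of c(n,k;q) = (1/[n-1]_q) * qbinom(3n-3, n+k) * qbinom(k-1, n-2) at any primitive d-th root of unity ω equals 0. -/

import Mathlib

open Polynomial Finset


/-- The Gaussian binomial coefficient as a polynomial in `q` over `ℤ`, via the
`q`-Pascal recursion `[n+1, k+1]_q = [n, k]_q + q^(k+1)·[n, k+1]_q`. -/
noncomputable def gauss : ℕ → ℕ → Polynomial ℤ
  | _, 0 => 1
  | 0, _ + 1 => 0
  | n + 1, k + 1 => gauss n k + Polynomial.X ^ (k + 1) * gauss n (k + 1)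

lemma gauss_eq_zero_of_lt : ∀ {m r : ℕ}, m < r → gauss m r = 0 := by
  intro m
  induction m with
  | zero =>
    intro r hr
    match r, hr with
    | r + 1, _ => rfl
  | succ m ih =>
    intro r hr
    match r, hr with
    | r + 1, hr =>
      show gauss m r + X ^ (r + 1) * gauss m (r + 1) = 0
      rw [ih (show m < r by omega), ih (show m < r + 1 by omega), mul_zero, add_zero]

lemma gauss_zero_right (m : ℕ) : gauss m 0 = 1 := by
  match m with
  | 0 => rfl
  | m + 1 => rfl

lemma gauss_mul_prod (N : ℕ) : ∀ s r : ℕ, s + r = N →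
    gauss (s + r) r * ∏ i ∈ range r, (X ^ (i + 1) - 1) =
      ∏ i ∈ range r, (X ^ (s + i + 1) - 1) := by
  induction N using Nat.strong_induction_on with
  | _ N ih =>
    intro s r hN
    match r with
    | 0 => simp [gauss_zero_right]
    | r + 1 =>
      have hrec : gauss (s + (r + 1)) (r + 1)
          = gauss (s + r) r + X ^ (r + 1) * gauss (s + r) (r + 1) := rfl
      have hD : (∏ i ∈ range (r + 1), (X ^ (i + 1) - 1) : ℤ[X])
          = (∏ i ∈ range r, (X ^ (i + 1) - 1)) * (X ^ (r + 1) - 1) := prod_range_succ _ _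
      have hA := ih (s + r) (by omega) s r rfl
      match s with
      | 0 =>
        rw [hrec, gauss_eq_zero_of_lt (show 0 + r < r + 1 by omega), mul_zero, add_zero,
          hD, ← mul_assoc, hA, prod_range_succ]
        simp only [Nat.zero_add]
      | s + 1 =>
        have hB := ih ((s + 1) + r) (by omega) s (r + 1) (by omega)
        rw [show s + (r + 1) = (s + 1) + r by omega] at hB
        set P : ℤ[X] := ∏ i ∈ range r, (X ^ (s + 1 + i + 1) - 1) with hP
        have hQ : (∏ i ∈ range (r + 1), (X ^ (s + i + 1) - 1) : ℤ[X])
            = P * (X ^ (s + 1) - 1) := by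
          rw [prod_range_succ', hP]
          congr 1
          exact prod_congr rfl fun i _ => by
            rw [show s + (i + 1) + 1 = s + 1 + i + 1 by omega]
        rw [hQ, hD] at hB
        rw [hrec, hD, prod_range_succ]
        linear_combination (X ^ (r + 1) - 1 : ℤ[X]) * hA + (X : ℤ[X]) ^ (r + 1) * hB

lemma rm_X_pow_sub_one {d : ℕ} (hd : 0 < d) {ω : ℂ} (hω : IsPrimitiveRoot ω d)
    {j : ℕ} (hj : 0 < j) :
    rootMultiplicity ω (X ^ j - 1 : ℂ[X]) = if d ∣ j then 1 else 0 := by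
  have hC : (X ^ j - 1 : ℂ[X]) = X ^ j - C 1 := by rw [map_one]
  split_ifs with h
  · have hne : (X ^ j - 1 : ℂ[X]) ≠ 0 := by rw [hC]; exact X_pow_sub_C_ne_zero hj 1
    have hroot : IsRoot (X ^ j - 1 : ℂ[X]) ω := by
      simp [IsRoot, sub_eq_zero, hω.pow_eq_one_iff_dvd, h]
    have h1 : 0 < rootMultiplicity ω (X ^ j - 1 : ℂ[X]) :=
      (rootMultiplicity_pos hne).2 hroot
    have hsep : (X ^ j - 1 : ℂ[X]).Separable := by
      rw [hC]
      exact separable_X_pow_sub_C 1 (by exact_mod_cast hj.ne') one_ne_zero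
    have h2 := rootMultiplicity_le_one_of_separable hsep ω
    omega
  · refine rootMultiplicity_eq_zero ?_
    simp only [IsRoot, eval_sub, eval_pow, eval_X, eval_one, sub_eq_zero]
    rw [hω.pow_eq_one_iff_dvd]
    exact h

lemma rm_prod {ι : Type*} (s : Finset ι) (f : ι → Polynomial ℂ)
    (h : ∀ i ∈ s, f i ≠ 0) (a : ℂ) :
    rootMultiplicity a (∏ i ∈ s, f i) = ∑ i ∈ s, rootMultiplicity a (f i) := by
  classical
  induction s using Finset.induction with
  | empty => simp
  | insert _ _ hx ih =>
    rename_i x s'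
    rw [prod_insert hx, sum_insert hx,
      rootMultiplicity_mul (by
        rw [← prod_insert hx]
        exact prod_ne_zero_iff.2 h),
      ih fun i hi => h i (mem_insert_of_mem hi)]

lemma aeval_gauss_eq_zero {d : ℕ} (hd : 0 < d) {ω : ℂ} (hω : IsPrimitiveRoot ω d)
    (s r : ℕ) (h : s / d + r / d < (s + r) / d) :
    Polynomial.aeval ω (gauss (s + r) r) = 0 := by
  classical
  have key := congrArg (Polynomial.map (algebraMap ℤ ℂ)) (gauss_mul_prod (s + r) s r rfl)
  simp only [Polynomial.map_mul, Polynomial.map_prod, Polynomial.map_sub, Polynomial.map_pow,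
    Polynomial.map_X, Polynomial.map_one] at key
  set G : Polynomial ℂ := (gauss (s + r) r).map (algebraMap ℤ ℂ) with hG
  have hfne : ∀ j : ℕ, 0 < j → (X ^ j - 1 : ℂ[X]) ≠ 0 := fun j hj => by
    rw [show (X ^ j - 1 : ℂ[X]) = X ^ j - C 1 by rw [map_one]]
    exact X_pow_sub_C_ne_zero hj 1
  have hRne : (∏ i ∈ range r, (X ^ (s + i + 1) - 1) : ℂ[X]) ≠ 0 :=
    prod_ne_zero_iff.2 fun i _ => hfne _ (by omega)
  have hmulne : G * ∏ i ∈ range r, (X ^ (i + 1) - 1) ≠ 0 := key ▸ hRne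
  have hGne : G ≠ 0 := left_ne_zero_of_mul hmulne
  have hcount : rootMultiplicity ω G
      + ∑ i ∈ range r, rootMultiplicity ω (X ^ (i + 1) - 1 : ℂ[X])
      = ∑ i ∈ range r, rootMultiplicity ω (X ^ (s + i + 1) - 1 : ℂ[X]) := by
    rw [← rm_prod _ _ (fun i _ => hfne _ (by omega)) ω,
      ← rm_prod _ _ (fun i _ => hfne _ (by omega)) ω,
      ← rootMultiplicity_mul hmulne, key]
  have hden : ∑ i ∈ range r, rootMultiplicity ω (X ^ (i + 1) - 1 : ℂ[X]) = r / d := by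
    rw [← Nat.card_multiples r d]
    rw [Finset.card_filter]
    exact Finset.sum_congr rfl fun i _ => rm_X_pow_sub_one hd hω (by omega)
  have hnum : ∑ i ∈ range r, rootMultiplicity ω (X ^ (s + i + 1) - 1 : ℂ[X])
      = (s + r) / d - s / d := by
    have h1 : ∑ i ∈ range (s + r), (if d ∣ i + 1 then 1 else 0)
        = ∑ i ∈ range s, (if d ∣ i + 1 then 1 else 0)
          + ∑ i ∈ range r, (if d ∣ s + i + 1 then 1 else 0) := by
      rw [Finset.sum_range_add]
    have h2 : ∀ m : ℕ, ∑ i ∈ range m, (if d ∣ i + 1 then 1 else 0) = m / d := by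
      intro m
      rw [← Nat.card_multiples m d, Finset.card_filter]
    have h3 : ∑ i ∈ range r, rootMultiplicity ω (X ^ (s + i + 1) - 1 : ℂ[X])
        = ∑ i ∈ range r, (if d ∣ s + i + 1 then 1 else 0) :=
      Finset.sum_congr rfl fun i _ => rm_X_pow_sub_one hd hω (by omega)
    rw [h3]
    have := h1
    rw [h2, h2] at this
    omega
  have hpos : 0 < rootMultiplicity ω G := by omega
  have : IsRoot G ω := ((rootMultiplicity_pos hGne).1 hpos)
  rw [Polynomial.aeval_def, ← Polynomial.eval_map]
  exact this

lemma mod_eq_of_rep {d a rem quot : ℕ} (h : a = rem + d * quot) (h2 : rem < d) :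
    a % d = rem := by
  subst h
  rw [Nat.add_mul_mod_self_left, Nat.mod_eq_of_lt h2]

lemma div_lt_of_carry {d a b : ℕ} (hd : 0 < d) (h : d ≤ a % d + b % d) :
    a / d + b / d < (a + b) / d := by
  rw [Nat.add_div hd, if_pos h]
  omega

/-- For `d ≥ 3` dividing `n` but not `k`, with `n-1 ≤ k ≤ 2n-3`, the evaluation of
`c(n,k;q) = (1/[n-1]_q)·[3n-3, n+k]_q·[k-1, n-2]_q` at any primitive `d`-th root of
unity `ω` equals `0`. -/
theorem stmt3 (n k d : ℕ) (hd : 3 ≤ d) (hdn : d ∣ n) (hdk : ¬ d ∣ k)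
    (hnk : (n : ℤ) - 1 ≤ (k : ℤ)) (hk : (k : ℤ) ≤ 2 * (n : ℤ) - 3)
    (ω : ℂ) (hω : IsPrimitiveRoot ω d) :
    Polynomial.aeval ω (gauss (3 * n - 3) (n + k)) *
        Polynomial.aeval ω (gauss (k - 1) (n - 2)) /
        (∑ i ∈ Finset.range (n - 1), ω ^ i) = 0 := by
  have hd0 : 0 < d := by omega
  have h1 : n ≤ k + 1 := by exact_mod_cast (show (n : ℤ) ≤ (k : ℤ) + 1 by linarith)
  have h2 : k + 3 ≤ 2 * n := by exact_mod_cast (show (k : ℤ) + 3 ≤ 2 * (n : ℤ) by linarith)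
  have hn2 : 2 ≤ n := by omega
  obtain ⟨t, ht⟩ := hdn
  set s := k % d with hs
  set q := k / d with hq
  have hkeq : k = d * q + s := (Nat.div_add_mod k d).symm
  have hslt : s < d := Nat.mod_lt _ hd0
  have hs0 : s ≠ 0 := fun h => hdk (Nat.dvd_of_mod_eq_zero h)
  have ht1 : 1 ≤ t := by
    rcases Nat.eq_zero_or_pos t with h | h
    · rw [h, Nat.mul_zero] at ht; omega
    · exact h
  by_cases hcase : d - 2 ≤ s
  · -- first factor vanishes
    -- q + 2 ≤ 2 * t
    have hq2t : q + 2 ≤ 2 * t := by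
      by_contra hcon
      have hle : 2 * t ≤ q + 1 := by omega
      have := Nat.mul_le_mul_left d hle
      have e1 : d * (2 * t) = 2 * (d * t) := by ring
      have e2 : d * (q + 1) = d * q + d := by ring
      omega
    obtain ⟨u, hu⟩ : ∃ u, 2 * t = u + q + 2 := ⟨2 * t - q - 2, by omega⟩
    have h2n : 2 * n = d * u + d * q + 2 * d := by
      have : 2 * (d * t) = d * (2 * t) := by ring
      rw [ht, this, hu]; ring
    have hm1 : (2 * n - 3 - k) % d = 2 * d - s - 3 :=
      mod_eq_of_rep (quot := u) (by omega) (by omega)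
    have hm2 : (n + k) % d = s :=
      mod_eq_of_rep (show n + k = s + d * (t + q) by rw [ht, hkeq]; ring) hslt
    have hcarry : d ≤ (2 * n - 3 - k) % d + (n + k) % d := by omega
    have hvan : Polynomial.aeval ω (gauss ((2 * n - 3 - k) + (n + k)) (n + k)) = 0 :=
      aeval_gauss_eq_zero hd0 hω _ _ (div_lt_of_carry hd0 hcarry)
    rw [show 3 * n - 3 = (2 * n - 3 - k) + (n + k) by omega, hvan, zero_mul, zero_div]
  · -- second factor vanishes
    have hqt : t ≤ q := by
      by_contra hcon
      have hle : q + 1 ≤ t := by omega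
      have := Nat.mul_le_mul_left d hle
      have e1 : d * (q + 1) = d * q + d := by ring
      omega
    obtain ⟨w, hw⟩ : ∃ w, q = t + w := ⟨q - t, by omega⟩
    have hkeq2 : k = d * t + d * w + s := by
      rw [hkeq, hw]; ring
    obtain ⟨v, hv⟩ : ∃ v, t = v + 1 := ⟨t - 1, by omega⟩
    have hneq : n = d * v + d := by rw [ht, hv]; ring
    have hm1 : (k + 1 - n) % d = s + 1 :=
      mod_eq_of_rep (quot := w) (by omega) (by omega)
    have hm2 : (n - 2) % d = d - 2 :=
      mod_eq_of_rep (quot := v) (by omega) (by omega)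
    have hcarry : d ≤ (k + 1 - n) % d + (n - 2) % d := by omega
    have hvan : Polynomial.aeval ω (gauss ((k + 1 - n) + (n - 2)) (n - 2)) = 0 :=
      aeval_gauss_eq_zero hd0 hω _ _ (div_lt_of_carry hd0 hcarry)
    rw [show k - 1 = (k + 1 - n) + (n - 2) by omega, hvan, mul_zero, zero_div]
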